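/- Let d ≥ 1 and let τ, σ_u, σ_v, σ_w ∈ S_d with τ a transposition. Write τ = (τ₁ τ₂) and suppose τ₁ and τ₂ lie in two distinct cycles of σ_u (so that σ̃ := τ∘σ_u joins these two cycles into one). If the subgroup ⟨τ, σ_u, σ_v, σ_w⟩ acts transitively on {1,…,d}, then the subgroup ⟨τ∘σ_u, σ_v, σ_w⟩ also acts transitively on {1,…,d}. -/

import Mathlib

open Equiv Equiv.Perm Subgroup

/-- If `t₁` and `t₂` lie in different cycles of `σ`, then they lie in the same cycle
of `swap t₁ t₂ * σ`. -/
lemma sameCycle_swap_mul_of_not_sameCycle {d : ℕ} (σ : Equiv.Perm (Fin d))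
    {t₁ t₂ : Fin d} (hne : t₁ ≠ t₂) (hcyc : ¬ σ.SameCycle t₁ t₂) :
    (Equiv.swap t₁ t₂ * σ).SameCycle t₂ t₁ := by
  have hex : ∃ n, 0 < n ∧ (σ ^ n) t₂ = t₂ :=
    ⟨orderOf σ, orderOf_pos σ, by rw [pow_orderOf_eq_one]; rfl⟩
  classical
  let n := Nat.find hex
  have hn : 0 < n ∧ (σ ^ n) t₂ = t₂ := Nat.find_spec hex
  have hmin : ∀ m, 0 < m → m < n → (σ ^ m) t₂ ≠ t₂ := by
    intro m hm hmn h
    exact Nat.find_min hex hmn ⟨hm, h⟩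
  have hne1 : ∀ m : ℕ, (σ ^ m) t₂ ≠ t₁ := by
    intro m h
    exact hcyc ((Equiv.Perm.SameCycle.symm ⟨(m : ℤ), by simpa using h⟩))
  have key : ∀ m, 0 < m → m ≤ n →
      ((Equiv.swap t₁ t₂ * σ) ^ m) t₂ = Equiv.swap t₁ t₂ ((σ ^ m) t₂) := by
    intro m hm hmn
    induction m with
    | zero => omega
    | succ m ih =>
      rcases Nat.eq_zero_or_pos m with hm0 | hm0
      · subst hm0; simp [Equiv.Perm.mul_apply]
      · have hmlt : m < n := lt_of_lt_of_le (Nat.lt_succ_self m) hmn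
        have ihm := ih hm0 (le_of_lt hmlt)
        have hfix : Equiv.swap t₁ t₂ ((σ ^ m) t₂) = (σ ^ m) t₂ :=
          Equiv.swap_apply_of_ne_of_ne (hne1 m) (hmin m hm0 hmlt)
        calc ((Equiv.swap t₁ t₂ * σ) ^ (m + 1)) t₂
            = (Equiv.swap t₁ t₂ * σ) (((Equiv.swap t₁ t₂ * σ) ^ m) t₂) := by
              rw [pow_succ', Equiv.Perm.mul_apply]
          _ = Equiv.swap t₁ t₂ (σ ((σ ^ m) t₂)) := by
              rw [ihm, hfix, Equiv.Perm.mul_apply]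
          _ = Equiv.swap t₁ t₂ ((σ ^ (m + 1)) t₂) := by rw [pow_succ', Equiv.Perm.mul_apply]
  refine ⟨(n : ℤ), ?_⟩
  have := key n hn.1 le_rfl
  rw [zpow_natCast, this, hn.2, Equiv.swap_apply_right]

/-- Let `τ = (τ₁ τ₂)` be a transposition whose entries lie in two
distinct cycles of `σ_u` (so that `τ ∘ σ_u` joins these two cycles into one).  If
`⟨τ, σ_u, σ_v, σ_w⟩` acts transitively on `{1, …, d}`, then so does
`⟨τ ∘ σ_u, σ_v, σ_w⟩`. -/
theorem transitivity_after_join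
    {d : ℕ} (hd : 1 ≤ d) (σu σv σw : Equiv.Perm (Fin d)) (t₁ t₂ : Fin d)
    (hne : t₁ ≠ t₂) (hcyc : ¬ σu.SameCycle t₁ t₂)
    (htrans : ∀ k l : Fin d,
      ∃ g ∈ Subgroup.closure
        ({Equiv.swap t₁ t₂, σu, σv, σw} : Set (Equiv.Perm (Fin d))), g k = l) :
    ∀ k l : Fin d,
      ∃ g ∈ Subgroup.closure
        ({Equiv.swap t₁ t₂ * σu, σv, σw} : Set (Equiv.Perm (Fin d))), g k = l := by
  classical
  intro k l
  set st := Equiv.swap t₁ t₂ * σu with hst_def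
  set H := Subgroup.closure ({st, σv, σw} : Set (Equiv.Perm (Fin d))) with hH_def
  -- the orbit of k under H
  set S : Set (Fin d) := {x | ∃ g ∈ H, g k = x} with hS_def
  have hSk : k ∈ S := ⟨1, one_mem _, rfl⟩
  have hH : ∀ g ∈ H, ∀ x ∈ S, g x ∈ S := by
    rintro g hg x ⟨p, hp, hpk⟩
    exact ⟨g * p, mul_mem hg hp, by simp [Equiv.Perm.mul_apply, hpk]⟩
  have hstH : st ∈ H := Subgroup.subset_closure (by simp)
  have hvH : σv ∈ H := Subgroup.subset_closure (by simp)
  have hwH : σw ∈ H := Subgroup.subset_closure (by simp)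
  obtain ⟨i, hi⟩ := sameCycle_swap_mul_of_not_sameCycle σu hne hcyc
  -- t₁ ∈ S ↔ t₂ ∈ S
  have h21 : t₂ ∈ S → t₁ ∈ S := fun h => by
    have := hH (st ^ i) (zpow_mem hstH i) t₂ h
    rwa [hi] at this
  have h12 : t₁ ∈ S → t₂ ∈ S := fun h => by
    have := hH (st ^ (-i)) (zpow_mem hstH (-i)) t₁ h
    rwa [← hi, zpow_neg, Equiv.Perm.inv_def, Equiv.symm_apply_apply] at this
  -- S is invariant under the swap
  have hτ : ∀ x ∈ S, Equiv.swap t₁ t₂ x ∈ S := by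
    intro x hx
    rcases eq_or_ne x t₁ with rfl | h1
    · rw [Equiv.swap_apply_left]; exact h12 hx
    rcases eq_or_ne x t₂ with rfl | h2
    · rw [Equiv.swap_apply_right]; exact h21 hx
    · rwa [Equiv.swap_apply_of_ne_of_ne h1 h2]
  -- S is invariant under σu and σu⁻¹
  have hσ : ∀ x ∈ S, σu x ∈ S := by
    intro x hx
    have h1 : st x ∈ S := hH st hstH x hx
    have h2 : Equiv.swap t₁ t₂ (st x) ∈ S := hτ _ h1
    rwa [hst_def, Equiv.Perm.mul_apply, Equiv.swap_apply_self] at h2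
  have hσinv : ∀ x ∈ S, σu⁻¹ x ∈ S := by
    intro x hx
    have h1 : Equiv.swap t₁ t₂ x ∈ S := hτ _ hx
    have h2 : st⁻¹ (Equiv.swap t₁ t₂ x) ∈ S := hH st⁻¹ (inv_mem hstH) _ h1
    rwa [hst_def, mul_inv_rev, Equiv.swap_inv, Equiv.Perm.mul_apply,
      Equiv.swap_apply_self] at h2
  -- every element of the big closure preserves S
  obtain ⟨g, hg, hgk⟩ := htrans k l
  have main : ∀ x ∈ S, g x ∈ S := by
    refine (Subgroup.closure_induction
      (p := fun g _ => (∀ x ∈ S, g x ∈ S) ∧ (∀ x ∈ S, g⁻¹ x ∈ S))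
      ?_ ?_ ?_ ?_ hg).1
    · intro y hy
      simp only [Set.mem_insert_iff, Set.mem_singleton_iff] at hy
      rcases hy with rfl | rfl | rfl | rfl
      · exact ⟨hτ, by rwa [Equiv.swap_inv]⟩
      · exact ⟨hσ, hσinv⟩
      · exact ⟨hH _ hvH, hH _ (inv_mem hvH)⟩
      · exact ⟨hH _ hwH, hH _ (inv_mem hwH)⟩
    · exact ⟨fun x hx => by simpa using hx, fun x hx => by simpa using hx⟩
    · rintro a b _ _ ⟨ha, ha'⟩ ⟨hb, hb'⟩
      exact ⟨fun x hx => by rw [Equiv.Perm.mul_apply]; exact ha _ (hb _ hx),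
        fun x hx => by rw [mul_inv_rev, Equiv.Perm.mul_apply]; exact hb' _ (ha' _ hx)⟩
    · rintro a _ ⟨ha, ha'⟩
      exact ⟨ha', by simpa using ha⟩
  have hl : l ∈ S := by rw [← hgk]; exact main k hSk
  obtain ⟨g', hg', hgk'⟩ := hl
  exact ⟨g', hg', hgk'⟩
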